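/- Let B be a quasi-greedy basis with quasi-greedy constant K in a real Banach space X and suppose that for some constant C₂ and function η, (1/C₂)η(|Γ|) ≤ ‖Σ_{k∈Γ} e_k‖ for all finite Γ. Then for each k, the k-th largest coefficient modulus satisfies a_k*(x)·η(k) ≤ 4C₂K²·‖Σ_{j=1}^k a_{π(j)}(x) e_{π(j)}‖ ≤ 4C₂K³‖x‖, where π realizes the decreasing rearrangement. -/

import Mathlib

open Finset Filter

/-- A (seminormalized Schauder) basis of a real normed space, given by the basis
vectors `e k` together with the coefficient functionals `coeff k`. -/
structure QGBasis (X : Type*) [NormedAddCommGroup X] [NormedSpace ℝ X] where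
  e : ℕ → X
  coeff : ℕ → X → ℝ
  coeff_add : ∀ k x y, coeff k (x + y) = coeff k x + coeff k y
  coeff_smul : ∀ (k : ℕ) (c : ℝ) (x : X), coeff k (c • x) = c * coeff k x
  coeff_e : ∀ j k, coeff j (e k) = if j = k then 1 else 0
  expansion : ∀ x : X,
    Tendsto (fun N => ∑ k ∈ Finset.range N, coeff k x • e k) atTop (nhds x)
  c_norm : ℝ
  C_norm : ℝ
  c_norm_pos : 0 < c_norm
  norm_e_ge : ∀ k, c_norm ≤ ‖e k‖
  norm_e_le : ∀ k, ‖e k‖ ≤ C_norm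

namespace QGBasis

variable {X : Type*} [NormedAddCommGroup X] [NormedSpace ℝ X] (B : QGBasis X)

/-- `π` enumerates the coefficients of `x` in decreasing order of modulus;
position `k` (zero-based) carries the `(k+1)`-st largest coefficient. -/
def IsGreedyPerm (x : X) (π : ℕ → ℕ) : Prop :=
  Function.Bijective π ∧ ∀ k, |B.coeff (π (k + 1)) x| ≤ |B.coeff (π k) x|

/-- The thresholding greedy approximation of order `N` associated to the
greedy enumeration `π`. -/
def G (π : ℕ → ℕ) (N : ℕ) (x : X) : X :=
  ∑ k ∈ Finset.range N, B.coeff (π k) x • B.e (π k)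

/-- `B` is quasi-greedy with constant `K`. -/
def QuasiGreedyWith (K : ℝ) : Prop :=
  ∀ (x : X) (π : ℕ → ℕ), B.IsGreedyPerm x π → ∀ N,
    ‖B.G π N x‖ ≤ K * ‖x‖ ∧ ‖x - B.G π N x‖ ≤ K * ‖x‖

/-- Coordinate projection onto the index set `Γ`. -/
def S (Γ : Finset ℕ) (x : X) : X := ∑ k ∈ Γ, B.coeff k x • B.e k

/-- Right democracy function. -/
noncomputable def hr (N : ℕ) : ℝ :=
  sSup {r | ∃ Γ : Finset ℕ, Γ.card = N ∧ r = ‖∑ k ∈ Γ, B.e k‖}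

/-- Left democracy function. -/
noncomputable def hl (N : ℕ) : ℝ :=
  sInf {r | ∃ Γ : Finset ℕ, Γ.card = N ∧ r = ‖∑ k ∈ Γ, B.e k‖}

/-- The democracy ratio `μ(N) = sup_{1 ≤ k ≤ N} h_r(k)/h_l(k)`. -/
noncomputable def mu (N : ℕ) : ℝ :=
  sSup {r | ∃ k, 1 ≤ k ∧ k ≤ N ∧ r = B.hr k / B.hl k}

/-- Best `N`-term approximation error. -/
noncomputable def sigma (N : ℕ) (x : X) : ℝ :=
  sInf {r | ∃ (Γ : Finset ℕ) (b : ℕ → ℝ),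
    Γ.card ≤ N ∧ r = ‖x - ∑ k ∈ Γ, b k • B.e k‖}

/-- `Γ` is a greedy set for `x`: every coefficient inside dominates every
coefficient outside. -/
def IsGreedySet (x : X) (Γ : Finset ℕ) : Prop :=
  ∀ j ∈ Γ, ∀ i ∉ Γ, |B.coeff i x| ≤ |B.coeff j x|

end QGBasis

namespace QGBasis
variable {X : Type*} [NormedAddCommGroup X] [NormedSpace ℝ X] (B : QGBasis X)

lemma coeff_zero' (j : ℕ) : B.coeff j 0 = 0 := by
  have h := B.coeff_add j 0 0
  simp only [add_zero] at h; linarith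

lemma coeff_sum' {ι : Type*} (j : ℕ) (s : Finset ι) (f : ι → X) :
    B.coeff j (∑ i ∈ s, f i) = ∑ i ∈ s, B.coeff j (f i) := by
  classical
  induction s using Finset.induction_on with
  | empty => simpa using B.coeff_zero' j
  | insert a s h ih => simp [Finset.sum_insert h, B.coeff_add, ih]

lemma coeff_enum_sum (π : ℕ → ℕ) (hinj : Function.Injective π) (c : ℕ → ℝ)
    (N l : ℕ) :
    B.coeff (π l) (∑ i ∈ Finset.range N, c i • B.e (π i)) =
      if l < N then c l else 0 := by
  rw [B.coeff_sum']
  have : ∀ i ∈ Finset.range N, B.coeff (π l) (c i • B.e (π i)) =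
      if l = i then c i else 0 := by
    intro i _
    rw [B.coeff_smul, B.coeff_e]
    by_cases h : l = i
    · simp [h]
    · have : π l ≠ π i := fun hc => h (hinj hc)
      simp [h, this]
  rw [Finset.sum_congr rfl this, Finset.sum_ite_eq]
  simp [Finset.mem_range]

lemma one_le_K {K : ℝ} (hK : B.QuasiGreedyWith K) : 1 ≤ K := by
  have hgp : B.IsGreedyPerm (B.e 0) id := by
    refine ⟨Function.bijective_id, ?_⟩
    intro k
    simp only [id_eq, B.coeff_e]
    rcases Nat.eq_zero_or_pos k with hk | hk
    · subst hk; norm_num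
    · have : k ≠ 0 := hk.ne'
      simp [this, Nat.succ_ne_zero]
  have h := (hK (B.e 0) id hgp 0).2
  have h0 : B.G id 0 (B.e 0) = 0 := by simp [QGBasis.G]
  rw [h0, sub_zero] at h
  have he : 0 < ‖B.e 0‖ := lt_of_lt_of_le B.c_norm_pos (B.norm_e_ge 0)
  nlinarith

end QGBasis

section Helpers

lemma abel_bound {X : Type*} [NormedAddCommGroup X] [NormedSpace ℝ X]
    {S : ℕ → X} {b : ℕ → ℝ} {M : ℝ} (n : ℕ)
    (hS0 : S 0 = 0) (hSM : ∀ l, ‖S l‖ ≤ M)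
    (hbpos : ∀ l, l ≤ n → 0 < b l)
    (hmono : ∀ l, l < n → b (l + 1) ≤ b l) :
    ‖∑ l ∈ Finset.range (n + 1), (b l)⁻¹ • (S (l + 1) - S l)‖ ≤
      2 * (b n)⁻¹ * M := by
  have hM : 0 ≤ M := le_trans (by simp [hS0]) (hSM 0)
  have hbn : 0 < b n := hbpos n le_rfl
  have key : ∑ l ∈ Finset.range (n + 1), (b l)⁻¹ • (S (l + 1) - S l) =
      (b n)⁻¹ • S (n + 1) +
        ∑ l ∈ Finset.range n, ((b l)⁻¹ - (b (l + 1))⁻¹) • S (l + 1) := by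
    have expand : ∀ l ∈ Finset.range (n+1), (b l)⁻¹ • (S (l + 1) - S l) =
        (b l)⁻¹ • S (l + 1) - (b l)⁻¹ • S l := fun l _ => smul_sub _ _ _
    rw [Finset.sum_congr rfl expand, Finset.sum_sub_distrib]
    have hA : ∑ l ∈ Finset.range (n+1), (b l)⁻¹ • S (l + 1) =
        (∑ l ∈ Finset.range n, (b l)⁻¹ • S (l + 1)) + (b n)⁻¹ • S (n + 1) :=
      Finset.sum_range_succ _ n
    have hB : ∑ l ∈ Finset.range (n+1), (b l)⁻¹ • S l =
        (∑ l ∈ Finset.range n, (b (l+1))⁻¹ • S (l + 1)) + (b 0)⁻¹ • S 0 :=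
      Finset.sum_range_succ' _ n
    rw [hA, hB, hS0, smul_zero, add_zero]
    have expand2 : ∀ l ∈ Finset.range n, ((b l)⁻¹ - (b (l + 1))⁻¹) • S (l + 1) =
        (b l)⁻¹ • S (l + 1) - (b (l+1))⁻¹ • S (l + 1) := fun l _ => sub_smul _ _ _
    rw [Finset.sum_congr rfl expand2, Finset.sum_sub_distrib]
    abel
  rw [key]
  have h1 : ‖(b n)⁻¹ • S (n + 1)‖ ≤ (b n)⁻¹ * M := by
    rw [norm_smul, Real.norm_eq_abs, abs_of_pos (inv_pos.mpr hbn)]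
    exact mul_le_mul_of_nonneg_left (hSM _) (le_of_lt (inv_pos.mpr hbn))
  have h2 : ‖∑ l ∈ Finset.range n, ((b l)⁻¹ - (b (l + 1))⁻¹) • S (l + 1)‖ ≤
      ((b n)⁻¹ - (b 0)⁻¹) * M := by
    calc ‖∑ l ∈ Finset.range n, ((b l)⁻¹ - (b (l + 1))⁻¹) • S (l + 1)‖
        ≤ ∑ l ∈ Finset.range n, ‖((b l)⁻¹ - (b (l + 1))⁻¹) • S (l + 1)‖ :=
          norm_sum_le _ _
      _ ≤ ∑ l ∈ Finset.range n, ((b (l + 1))⁻¹ - (b l)⁻¹) * M := by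
          apply Finset.sum_le_sum
          intro l hl
          rw [Finset.mem_range] at hl
          rw [norm_smul, Real.norm_eq_abs]
          have hbl : 0 < b l := hbpos l (le_of_lt hl)
          have hbl1 : 0 < b (l + 1) := hbpos (l + 1) hl
          have hinv : (b l)⁻¹ ≤ (b (l + 1))⁻¹ := inv_anti₀ hbl1 (hmono l hl)
          rw [abs_of_nonpos (by linarith), neg_sub]
          exact mul_le_mul_of_nonneg_left (hSM _) (by linarith)
      _ = ((b n)⁻¹ - (b 0)⁻¹) * M := by
          rw [← Finset.sum_mul, Finset.sum_range_sub (fun l => (b l)⁻¹)]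
  have h0 : 0 < (b 0)⁻¹ := inv_pos.mpr (hbpos 0 (Nat.zero_le n))
  calc ‖(b n)⁻¹ • S (n + 1) +
        ∑ l ∈ Finset.range n, ((b l)⁻¹ - (b (l + 1))⁻¹) • S (l + 1)‖
      ≤ ‖(b n)⁻¹ • S (n + 1)‖ +
        ‖∑ l ∈ Finset.range n, ((b l)⁻¹ - (b (l + 1))⁻¹) • S (l + 1)‖ := norm_add_le _ _
    _ ≤ (b n)⁻¹ * M + ((b n)⁻¹ - (b 0)⁻¹) * M := add_le_add h1 h2
    _ ≤ 2 * (b n)⁻¹ * M := by nlinarith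

lemma exists_perm (n : ℕ) (P : Finset ℕ) (hP : P ⊆ Finset.range n) :
    ∃ τ : ℕ → ℕ, Function.Bijective τ ∧ (∀ i, n ≤ i → τ i = i) ∧
      (Finset.range P.card).image τ = P ∧
      (Finset.range n).image τ = Finset.range n := by
  classical
  set L : List ℕ := P.sort (· ≤ ·) ++ ((Finset.range n) \ P).sort (· ≤ ·) with hL
  have hPn : P.card ≤ n := by
    have := Finset.card_le_card hP; simpa using this
  have hlen : L.length = n := by
    rw [hL, List.length_append, Finset.length_sort, Finset.length_sort,
      Finset.card_sdiff_of_subset hP, Finset.card_range]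
    omega
  have hnodup : L.Nodup := by
    rw [hL]
    refine List.Nodup.append (Finset.sort_nodup _ _) (Finset.sort_nodup _ _) ?_
    intro a haP haM
    rw [Finset.mem_sort] at haP haM
    exact (Finset.mem_sdiff.mp haM).2 haP
  have hmem : ∀ a, a ∈ L → a ∈ Finset.range n := by
    intro a ha
    rw [hL, List.mem_append, Finset.mem_sort, Finset.mem_sort] at ha
    rcases ha with h | h
    · exact hP h
    · exact (Finset.mem_sdiff.mp h).1
  set τ : ℕ → ℕ := fun i => L.getD i i with hτ
  have hτlt : ∀ i (hi : i < n), τ i = L[i]'(hlen.symm ▸ hi) := by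
    intro i hi
    simp only [hτ]
    rw [List.getD_eq_getElem?_getD, List.getElem?_eq_getElem (hlen.symm ▸ hi)]
    rfl
  have hτge : ∀ i, n ≤ i → τ i = i := by
    intro i hi
    simp only [hτ]
    rw [List.getD_eq_default _ _ (by omega)]
  have hτmem : ∀ i, i < n → τ i ∈ Finset.range n := by
    intro i hi
    rw [hτlt i hi]
    exact hmem _ (List.getElem_mem _)
  have hinj : Function.Injective τ := by
    intro i j hij
    by_cases hi : i < n <;> by_cases hj : j < n
    · rw [hτlt i hi, hτlt j hj] at hij
      exact (List.Nodup.getElem_inj_iff hnodup).mp hij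
    · exfalso
      rw [hτlt i hi, hτge j (by omega)] at hij
      have := hmem _ (hij ▸ List.getElem_mem _)
      rw [Finset.mem_range] at this; omega
    · exfalso
      rw [hτge i (by omega), hτlt j hj] at hij
      have := hmem _ (hij.symm ▸ List.getElem_mem _)
      rw [Finset.mem_range] at this; omega
    · rw [hτge i (by omega), hτge j (by omega)] at hij; exact hij
  have himage : (Finset.range n).image τ = Finset.range n := by
    apply Finset.eq_of_subset_of_card_le
    · intro a ha
      rw [Finset.mem_image] at ha
      obtain ⟨i, hi, rfl⟩ := ha
      exact hτmem i (Finset.mem_range.mp hi)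
    · rw [Finset.card_image_of_injective _ hinj, Finset.card_range]
  have hsurj : Function.Surjective τ := by
    intro m
    by_cases hm : m < n
    · have : m ∈ (Finset.range n).image τ := by
        rw [himage]; exact Finset.mem_range.mpr hm
      rw [Finset.mem_image] at this
      obtain ⟨i, _, hi⟩ := this
      exact ⟨i, hi⟩
    · exact ⟨m, hτge m (by omega)⟩
  have hprefix : (Finset.range P.card).image τ = P := by
    apply Finset.eq_of_subset_of_card_le
    · intro a ha
      rw [Finset.mem_image] at ha
      obtain ⟨i, hi, rfl⟩ := ha
      rw [Finset.mem_range] at hi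
      rw [hτlt i (by omega)]
      have hi2 : i < (P.sort (· ≤ ·)).length := by rw [Finset.length_sort]; omega
      have h3 : (P.sort (· ≤ ·))[i]'hi2 ∈ P :=
        (Finset.mem_sort _).mp (List.getElem_mem _)
      have he : L[i]'(hlen.symm ▸ (by omega : i < n)) = (P.sort (· ≤ ·))[i]'hi2 :=
        List.getElem_append_left hi2
      exact he.symm ▸ h3
    · rw [Finset.card_image_of_injective _ hinj, Finset.card_range]
  exact ⟨τ, ⟨hinj, hsurj⟩, hτge, hprefix, himage⟩

end Helpers

set_option maxHeartbeats 1000000 in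
/-- the two-step estimate in Lemma 2.2:
`a_k*(x) η(k) ≤ 4C₂K² ‖∑_{j=1}^k a_{π(j)} e_{π(j)}‖ ≤ 4C₂K³ ‖x‖`.
Position `k` of the greedy enumeration `π` carries the `(k+1)`-st largest
coefficient, so `∑_{j=1}^{k+1}` is the greedy sum `G π (k+1) x`. -/
theorem stmt9 {X : Type*} [NormedAddCommGroup X] [NormedSpace ℝ X] [CompleteSpace X]
    (B : QGBasis X) (K : ℝ) (hK : B.QuasiGreedyWith K)
    (η : ℕ → ℝ) (C₂ : ℝ) (hC₂ : 0 < C₂)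
    (hlow : ∀ Γ : Finset ℕ, (1 / C₂) * η Γ.card ≤ ‖∑ k ∈ Γ, B.e k‖)
    (x : X) (π : ℕ → ℕ) (hπ : B.IsGreedyPerm x π) (k : ℕ) :
    |B.coeff (π k) x| * η (k + 1) ≤ 4 * C₂ * K ^ 2 * ‖B.G π (k + 1) x‖ ∧
    4 * C₂ * K ^ 2 * ‖B.G π (k + 1) x‖ ≤ 4 * C₂ * K ^ 3 * ‖x‖ := by
  classical
  obtain ⟨hbij, hdec⟩ := hπ
  have hKge : (1:ℝ) ≤ K := B.one_le_K hK
  set y := B.G π (k + 1) x with hy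
  have hyx : ‖y‖ ≤ K * ‖x‖ := (hK x π ⟨hbij, hdec⟩ (k + 1)).1
  have hynn : (0:ℝ) ≤ ‖y‖ := norm_nonneg y
  constructor
  swap
  · calc 4 * C₂ * K ^ 2 * ‖y‖ ≤ 4 * C₂ * K ^ 2 * (K * ‖x‖) :=
          mul_le_mul_of_nonneg_left hyx (by nlinarith : (0:ℝ) ≤ 4 * C₂ * K ^ 2)
      _ = 4 * C₂ * K ^ 3 * ‖x‖ := by ring
  -- main inequality
  set b : ℕ → ℝ := fun l => |B.coeff (π l) x| with hb
  rcases eq_or_lt_of_le (abs_nonneg (B.coeff (π k) x)) with ht | ht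
  · rw [← ht, zero_mul]
    have h4 : (0:ℝ) ≤ 4 * C₂ * K ^ 2 :=
      mul_nonneg (by linarith) (sq_nonneg K)
    exact mul_nonneg h4 (norm_nonneg y)
  -- now 0 < b k
  have hbanti : Antitone b := antitone_nat_of_succ_le (fun l => hdec l)
  have hbpos : ∀ l, l ≤ k → 0 < b l := fun l hl => lt_of_lt_of_le ht (hbanti hl)
  -- coefficients of y
  have hcy : ∀ l, B.coeff (π l) y = if l < k + 1 then B.coeff (π l) x else 0 :=
    fun l => B.coeff_enum_sum π hbij.1 (fun i => B.coeff (π i) x) (k + 1) l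
  -- π is a greedy permutation for y
  have hgy : B.IsGreedyPerm y π := by
    refine ⟨hbij, fun l => ?_⟩
    rw [hcy, hcy]
    by_cases h1 : l + 1 < k + 1
    · rw [if_pos h1, if_pos (by omega)]; exact hdec l
    · rw [if_neg h1]
      simp only [abs_zero]
      exact abs_nonneg _
  have hSM : ∀ l, ‖B.G π l y‖ ≤ K * ‖y‖ := fun l => (hK y π hgy l).1
  -- signs
  set ε : ℕ → ℝ := fun l => if 0 ≤ B.coeff (π l) x then 1 else -1 with hε
  have hεb : ∀ l, ε l * b l = B.coeff (π l) x := by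
    intro l
    simp only [hε, hb]
    by_cases h : 0 ≤ B.coeff (π l) x
    · rw [if_pos h, abs_of_nonneg h, one_mul]
    · rw [if_neg h, abs_of_neg (lt_of_not_ge h)]; ring
  set v : X := ∑ i ∈ Finset.range (k + 1), ε i • B.e (π i) with hv
  -- v as Abel sum
  have hveq : v = ∑ l ∈ Finset.range (k + 1),
      (b l)⁻¹ • (B.G π (l + 1) y - B.G π l y) := by
    rw [hv]
    apply Finset.sum_congr rfl
    intro l hl
    rw [Finset.mem_range] at hl
    have hstep : B.G π (l + 1) y - B.G π l y = B.coeff (π l) y • B.e (π l) := by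
      rw [QGBasis.G, QGBasis.G, Finset.sum_range_succ]; abel
    rw [hstep, hcy, if_pos hl, ← hεb l, smul_smul]
    congr 1
    have : b l ≠ 0 := ne_of_gt (hbpos l (by omega))
    field_simp
  have hvnorm : ‖v‖ ≤ 2 * (b k)⁻¹ * (K * ‖y‖) := by
    rw [hveq]
    exact abel_bound k (by simp [QGBasis.G]) hSM hbpos (fun l hl => hdec l)
  have htv : b k * ‖v‖ ≤ 2 * K * ‖y‖ := by
    have h := mul_le_mul_of_nonneg_left hvnorm (le_of_lt ht)
    have hbk : b k ≠ 0 := ne_of_gt ht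
    calc b k * ‖v‖ ≤ b k * (2 * (b k)⁻¹ * (K * ‖y‖)) := h
      _ = 2 * K * ‖y‖ := by field_simp
  -- sign removal via rearrangement
  set P : Finset ℕ := (Finset.range (k + 1)).filter (fun i => 0 ≤ B.coeff (π i) x)
    with hP
  obtain ⟨τ, hτbij, hτge, hτpre, hτim⟩ :=
    exists_perm (k + 1) P (Finset.filter_subset _ _)
  set σ : ℕ → ℕ := fun i => π (τ i) with hσ
  have hm : P.card ≤ k + 1 := by
    have := Finset.card_filter_le (Finset.range (k + 1))
      (fun i => 0 ≤ B.coeff (π i) x)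
    simpa using this
  have hτlt : ∀ i, i < k + 1 → τ i < k + 1 := by
    intro i hi
    have : τ i ∈ (Finset.range (k + 1)).image τ :=
      Finset.mem_image_of_mem τ (Finset.mem_range.mpr hi)
    rw [hτim, Finset.mem_range] at this
    exact this
  -- coefficients of v
  have hcv : ∀ l, B.coeff (π l) v = if l < k + 1 then ε l else 0 :=
    fun l => B.coeff_enum_sum π hbij.1 ε (k + 1) l
  have hεabs : ∀ l, |ε l| = 1 := by
    intro l
    simp only [hε]
    by_cases h : 0 ≤ B.coeff (π l) x <;> simp [h]
  -- σ is a greedy permutation for v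
  have hgv : B.IsGreedyPerm v σ := by
    constructor
    · exact Function.Bijective.comp hbij hτbij
    · intro l
      simp only [hσ]
      rw [hcv, hcv]
      by_cases h1 : l + 1 < k + 1
      · rw [if_pos (hτlt _ h1), if_pos (hτlt _ (by omega)), hεabs, hεabs]
      · rw [if_neg (by rw [hτge _ (by omega)]; omega)]
        simp only [abs_zero]
        exact abs_nonneg _
  -- identify greedy sums of v
  have hGm : B.G σ P.card v = ∑ i ∈ Finset.range P.card, B.e (π (τ i)) := by
    rw [QGBasis.G]
    apply Finset.sum_congr rfl
    intro i hi
    rw [Finset.mem_range] at hi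
    have hik : i < k + 1 := by omega
    have hτP : τ i ∈ P := by
      rw [← hτpre]
      exact Finset.mem_image_of_mem τ (Finset.mem_range.mpr hi)
    have hpos : 0 ≤ B.coeff (π (τ i)) x := (Finset.mem_filter.mp hτP).2
    simp only [hσ]
    rw [hcv, if_pos (hτlt i hik)]
    simp only [hε]
    rw [if_pos hpos, one_smul]
  have hGk : B.G σ (k + 1) v = v := by
    rw [QGBasis.G]
    have step : ∀ i ∈ Finset.range (k + 1),
        B.coeff (σ i) v • B.e (σ i) = ε (τ i) • B.e (π (τ i)) := by
      intro i hi
      rw [Finset.mem_range] at hi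
      simp only [hσ]
      rw [hcv, if_pos (hτlt i hi)]
    rw [Finset.sum_congr rfl step, hv]
    conv_rhs => rw [← hτim, Finset.sum_image (fun a _ c _ h => hτbij.1 h)]
  have hrest : v - B.G σ P.card v =
      -∑ i ∈ Finset.range (k + 1) \ Finset.range P.card, B.e (π (τ i)) := by
    have hsub : Finset.range P.card ⊆ Finset.range (k + 1) :=
      Finset.range_subset_range.mpr hm
    have : v - B.G σ P.card v = B.G σ (k + 1) v - B.G σ P.card v := by rw [hGk]
    rw [this, QGBasis.G, QGBasis.G, ← Finset.sum_sdiff_eq_sub hsub]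
    rw [← Finset.sum_neg_distrib]
    apply Finset.sum_congr rfl
    intro i hi
    rw [Finset.mem_sdiff, Finset.mem_range, Finset.mem_range] at hi
    obtain ⟨hik, him⟩ := hi
    have hτnP : τ i ∉ P := by
      intro hc
      rw [← hτpre, Finset.mem_image] at hc
      obtain ⟨j, hj, hji⟩ := hc
      rw [Finset.mem_range] at hj
      have := hτbij.1 hji
      omega
    have hneg : ¬ 0 ≤ B.coeff (π (τ i)) x := by
      intro hc
      exact hτnP (Finset.mem_filter.mpr ⟨Finset.mem_range.mpr (hτlt i hik), hc⟩)
    simp only [hσ]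
    rw [hcv, if_pos (hτlt i hik)]
    simp only [hε]
    rw [if_neg hneg, neg_one_smul]
  -- w and its norm
  set w : X := ∑ i ∈ Finset.range (k + 1), B.e (π i) with hw
  have hwsplit : w = B.G σ P.card v - (v - B.G σ P.card v) := by
    have hsub : Finset.range P.card ⊆ Finset.range (k + 1) :=
      Finset.range_subset_range.mpr hm
    rw [hrest, hGm, sub_neg_eq_add, hw]
    conv_lhs => rw [← hτim, Finset.sum_image (fun a _ c _ h => hτbij.1 h)]
    rw [← Finset.sum_sdiff hsub]
    abel
  have hwv : ‖w‖ ≤ 2 * K * ‖v‖ := by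
    rw [hwsplit]
    have h1 := (hK v σ hgv P.card).1
    have h2 := (hK v σ hgv P.card).2
    calc ‖B.G σ P.card v - (v - B.G σ P.card v)‖
        ≤ ‖B.G σ P.card v‖ + ‖v - B.G σ P.card v‖ := norm_sub_le _ _
      _ ≤ K * ‖v‖ + K * ‖v‖ := add_le_add h1 h2
      _ = 2 * K * ‖v‖ := by ring
  -- democracy lower bound
  have hηw : η (k + 1) ≤ C₂ * ‖w‖ := by
    have hΓ := hlow ((Finset.range (k + 1)).image π)
    rw [Finset.card_image_of_injective _ hbij.1, Finset.card_range] at hΓ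
    have hsum : ∑ j ∈ (Finset.range (k + 1)).image π, B.e j = w := by
      rw [hw, Finset.sum_image (fun a _ c _ h => hbij.1 h)]
    rw [hsum] at hΓ
    have := mul_le_mul_of_nonneg_left hΓ (le_of_lt hC₂)
    calc η (k + 1) = C₂ * (1 / C₂ * η (k + 1)) := by field_simp
      _ ≤ C₂ * ‖w‖ := this
  -- conclude
  have hKpos : (0:ℝ) < K := lt_of_lt_of_le one_pos hKge
  calc b k * η (k + 1) ≤ b k * (C₂ * ‖w‖) :=
        mul_le_mul_of_nonneg_left hηw (abs_nonneg _)
    _ ≤ b k * (C₂ * (2 * K * ‖v‖)) := by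
        apply mul_le_mul_of_nonneg_left _ (abs_nonneg _)
        exact mul_le_mul_of_nonneg_left hwv (le_of_lt hC₂)
    _ = 2 * C₂ * K * (b k * ‖v‖) := by ring
    _ ≤ 2 * C₂ * K * (2 * K * ‖y‖) := by
        apply mul_le_mul_of_nonneg_left htv
        positivity
    _ = 4 * C₂ * K ^ 2 * ‖y‖ := by ring
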